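/- (Existence of optimal stationary policy) For a randomly-terminated process on a finite graph, for every starting node x there exists a simple path ȳ ∈ Y(x) (i.e., a path where y_k = y_m implies y_{k+1} = y_{m+1}) achieving the minimum expected cost: J(ȳ) = min_{y ∈ Y(x)} J(y). Equivalently, there is a control mapping μ: X → X with μ(x') ∈ N(x') whose generated path from x is optimal. -/

import Mathlib

open scoped BigOperators

/-- Cost of the finite path `y 0, ..., y t`. -/
noncomputable def pathCost {X : Type*} (K : X → X → ℝ) (q : X → ℝ) (y : ℕ → X) (t : ℕ) : ℝ :=
  (∑ k ∈ Finset.range t, K (y k) (y (k + 1))) + q (y t)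

/-- Expected cost of an infinite path with per-step termination probability `p`:
`J(y) = ∑_{t=1}^∞ (1-p)^{t-1} p · Cost(y_0,...,y_t)`. -/
noncomputable def Jcost {X : Type*} (K : X → X → ℝ) (q : X → ℝ) (p : ℝ) (y : ℕ → X) : ℝ :=
  ∑' t : ℕ, (1 - p) ^ t * p * pathCost K q y (t + 1)


lemma pathCost_shift {X : Type*} (K : X → X → ℝ) (q : X → ℝ) (y : ℕ → X) (t : ℕ) :
    pathCost K q y (t + 1) = K (y 0) (y 1) + pathCost K q (fun n => y (n + 1)) t := by
  unfold pathCost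
  rw [Finset.sum_range_succ']
  ring

lemma abs_pathCost_le {X : Type*} {K : X → X → ℝ} {q : X → ℝ} {A B : ℝ}
    (hA : ∀ a b, |K a b| ≤ A) (hB : ∀ a, |q a| ≤ B) (y : ℕ → X) (t : ℕ) :
    |pathCost K q y t| ≤ A * t + B := by
  unfold pathCost
  calc |(∑ k ∈ Finset.range t, K (y k) (y (k + 1))) + q (y t)|
      ≤ |∑ k ∈ Finset.range t, K (y k) (y (k + 1))| + |q (y t)| := abs_add_le _ _
    _ ≤ (∑ k ∈ Finset.range t, |K (y k) (y (k + 1))|) + B :=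
        add_le_add (Finset.abs_sum_le_sum_abs _ _) (hB _)
    _ ≤ (∑ _k ∈ Finset.range t, A) + B := by
        gcongr with k hk
        exact hA _ _
    _ = A * t + B := by simp [mul_comm]

lemma summable_geom_linear {β : ℝ} (hβ : |β| < 1) {g : ℕ → ℝ} {A B : ℝ}
    (hg : ∀ t, |g t| ≤ A * t + B) : Summable fun t => β ^ t * g t := by
  have h1 : Summable (fun t : ℕ => (t : ℝ) * |β| ^ t) := by
    simpa using summable_pow_mul_geometric_of_norm_lt_one 1 (by simpa using hβ)
  have h2 : Summable (fun t : ℕ => |β| ^ t) := summable_geometric_of_lt_one (abs_nonneg β) hβ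
  apply Summable.of_norm_bounded (g := fun t : ℕ => A * ((t : ℝ) * |β| ^ t) + B * |β| ^ t)
    (((h1.mul_left A).add (h2.mul_left B)))
  intro t
  have h3 : ‖β ^ t * g t‖ = |β| ^ t * |g t| := by
    rw [Real.norm_eq_abs, abs_mul, abs_pow]
  rw [h3]
  have h4 : |β| ^ t * |g t| ≤ |β| ^ t * (A * t + B) := by
    apply mul_le_mul_of_nonneg_left (hg t) (by positivity)
  nlinarith [h4]

section
variable {X : Type*} {K : X → X → ℝ} {q : X → ℝ} {p A B : ℝ}

lemma hbeta (hp : 0 < p) (hp1 : p < 1) : |1 - p| < 1 := by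
  rw [abs_lt]; constructor <;> linarith

lemma summable_J (hp : 0 < p) (hp1 : p < 1)
    (hA : ∀ a b, |K a b| ≤ A) (hB : ∀ a, |q a| ≤ B) (y : ℕ → X) :
    Summable fun t => (1 - p) ^ t * p * pathCost K q y (t + 1) := by
  have := summable_geom_linear (hbeta hp hp1) (g := fun t => p * pathCost K q y (t + 1))
    (A := p * A) (B := p * (A + B)) (fun t => by
      have h := abs_pathCost_le hA hB y (t + 1)
      rw [abs_mul, abs_of_pos hp]
      push_cast at h ⊢
      nlinarith [mul_le_mul_of_nonneg_left h hp.le])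
  simpa [mul_assoc] using this

lemma summable_J0 (hp : 0 < p) (hp1 : p < 1)
    (hA : ∀ a b, |K a b| ≤ A) (hB : ∀ a, |q a| ≤ B) (y : ℕ → X) :
    Summable fun t => (1 - p) ^ t * p * pathCost K q y t := by
  have := summable_geom_linear (hbeta hp hp1) (g := fun t => p * pathCost K q y t)
    (A := p * A) (B := p * B) (fun t => by
      have h := abs_pathCost_le hA hB y t
      rw [abs_mul, abs_of_pos hp]
      nlinarith [mul_le_mul_of_nonneg_left h hp.le])
  simpa [mul_assoc] using this

lemma Jcost_rec (hp : 0 < p) (hp1 : p < 1)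
    (hA : ∀ a b, |K a b| ≤ A) (hB : ∀ a, |q a| ≤ B) (y : ℕ → X) :
    Jcost K q p y = (K (y 0) (y 1) + p * q (y 1)) + (1 - p) * Jcost K q p (fun n => y (n + 1)) := by
  set β := 1 - p with hβdef
  have hβ0 : 0 ≤ β := by simp [hβdef]; linarith
  have hβ1 : β < 1 := by simp [hβdef]; linarith
  have hs1 : Summable fun t : ℕ => β ^ t * (p * K (y 0) (y 1)) :=
    (summable_geometric_of_lt_one hβ0 hβ1).mul_right _
  have hs2 : Summable fun t : ℕ => β ^ t * p * pathCost K q (fun n => y (n + 1)) t :=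
    summable_J0 hp hp1 hA hB _
  have step1 : Jcost K q p y
      = ∑' t : ℕ, (β ^ t * (p * K (y 0) (y 1)) + β ^ t * p * pathCost K q (fun n => y (n + 1)) t) := by
    unfold Jcost
    apply tsum_congr
    intro t
    rw [pathCost_shift]
    ring
  rw [step1, Summable.tsum_add hs1 hs2, tsum_mul_right, tsum_geometric_of_lt_one hβ0 hβ1]
  have h1 : (1 - β)⁻¹ * (p * K (y 0) (y 1)) = K (y 0) (y 1) := by
    rw [hβdef, sub_sub_cancel, inv_mul_cancel_left₀ hp.ne']
  rw [h1, Summable.tsum_eq_zero_add hs2]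
  have h2 : β ^ 0 * p * pathCost K q (fun n => y (n + 1)) 0 = p * q (y 1) := by
    simp [pathCost]
  have h3 : (∑' t : ℕ, β ^ (t + 1) * p * pathCost K q (fun n => y (n + 1)) (t + 1))
      = β * Jcost K q p (fun n => y (n + 1)) := by
    unfold Jcost
    rw [← tsum_mul_left]
    apply tsum_congr
    intro t
    ring
  rw [h2, h3]
  ring

lemma abs_Jcost_le (hp : 0 < p) (hp1 : p < 1) (hA0 : 0 ≤ A) (hB0 : 0 ≤ B)
    (hA : ∀ a b, |K a b| ≤ A) (hB : ∀ a, |q a| ≤ B) (y : ℕ → X) :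
    |Jcost K q p y| ≤ ∑' t : ℕ, (1 - p) ^ t * (p * (A * (t + 1) + B)) := by
  have hβ0 : (0:ℝ) ≤ 1 - p := by linarith
  have hsb : Summable fun t : ℕ => (1 - p) ^ t * (p * (A * (t + 1) + B)) :=
    summable_geom_linear (hbeta hp hp1) (A := p * A) (B := p * (A + B)) (fun t => by
      have : |p * (A * (t + 1) + B)| = p * (A * (t + 1) + B) := by
        rw [abs_of_nonneg]; positivity
      rw [this]; push_cast; nlinarith)
  have hsf := summable_J hp hp1 hA hB y
  calc |Jcost K q p y| ≤ ∑' t : ℕ, |(1 - p) ^ t * p * pathCost K q y (t + 1)| := by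
        unfold Jcost
        have h := norm_tsum_le_tsum_norm (f := fun t : ℕ => (1 - p) ^ t * p * pathCost K q y (t + 1))
          (by simp only [Real.norm_eq_abs]; exact hsf.abs)
        simp only [Real.norm_eq_abs] at h
        exact h
    _ ≤ ∑' t : ℕ, (1 - p) ^ t * (p * (A * (t + 1) + B)) := by
        apply Summable.tsum_le_tsum _ hsf.abs hsb
        intro t
        have h := abs_pathCost_le hA hB y (t + 1)
        push_cast at h
        rw [abs_mul, abs_mul, abs_pow, abs_of_nonneg hβ0, abs_of_pos hp]
        have h2 := mul_le_mul_of_nonneg_left h (mul_nonneg (pow_nonneg hβ0 t) hp.le)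
        nlinarith [h2]

end


theorem stmt14 {X : Type*} [Fintype X] (N : X → Finset X) (hN : ∀ x, (N x).Nonempty)
    (K : X → X → ℝ) (q : X → ℝ) (p : ℝ) (hp : 0 < p) (hp1 : p < 1) (x : X) :
    ∃ μ : X → X, (∀ x', μ x' ∈ N x') ∧
      ((∀ k m : ℕ, (fun n => μ^[n] x) k = (fun n => μ^[n] x) m →
        (fun n => μ^[n] x) (k + 1) = (fun n => μ^[n] x) (m + 1)) ∧
      ∀ y : ℕ → X, y 0 = x → (∀ k, y (k + 1) ∈ N (y k)) →
        Jcost K q p (fun n => μ^[n] x) ≤ Jcost K q p y) := by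
  classical
  haveI : Nonempty X := ⟨x⟩
  set β := 1 - p with hβdef
  have hβ0 : 0 ≤ β := by rw [hβdef]; linarith
  have hβ1 : β < 1 := by rw [hβdef]; linarith
  obtain ⟨A, hA⟩ := Finite.exists_le (fun ab : X × X => |K ab.1 ab.2|)
  have hA' : ∀ a b, |K a b| ≤ A := fun a b => hA (a, b)
  obtain ⟨B, hB⟩ := Finite.exists_le (fun a : X => |q a|)
  have hA0 : 0 ≤ A := le_trans (abs_nonneg _) (hA' x x)
  have hB0 : 0 ≤ B := le_trans (abs_nonneg _) (hB x)
  set c : X → X → ℝ := fun a b => K a b + p * q b with hc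
  set T : (X → ℝ) → X → ℝ := fun V a => (N a).inf' (hN a) (fun b => c a b + β * V b) with hTdef
  -- contraction property
  have hdist : ∀ V W : X → ℝ, ∀ a, |T V a - T W a| ≤ β * dist V W := by
    have key : ∀ V W : X → ℝ, ∀ a, T V a - T W a ≤ β * dist V W := by
      intro V W a
      obtain ⟨b, hb, hbe⟩ := Finset.exists_mem_eq_inf' (hN a) (fun b => c a b + β * W b)
      have h1 : T V a ≤ c a b + β * V b := Finset.inf'_le _ hb
      have h2 : T W a = c a b + β * W b := hbe
      have h3 : V b - W b ≤ dist V W := by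
        have h := dist_le_pi_dist V W b
        rw [Real.dist_eq] at h
        exact (le_abs_self _).trans h
      have h4 : β * (V b - W b) ≤ β * dist V W := mul_le_mul_of_nonneg_left h3 hβ0
      nlinarith [h1, h2, h4]
    intro V W a
    rw [abs_sub_le_iff]
    constructor
    · exact key V W a
    · have := key W V a
      rwa [dist_comm] at this
  set L : NNReal := ⟨β, hβ0⟩ with hL
  have hcon : ContractingWith L T := by
    constructor
    · rw [← NNReal.coe_lt_coe]
      push_cast
      exact hβ1
    · apply LipschitzWith.of_dist_le_mul
      intro V W
      show dist (T V) (T W) ≤ β * dist V W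
      rw [dist_pi_le_iff (mul_nonneg hβ0 dist_nonneg)]
      intro a
      rw [Real.dist_eq]
      exact hdist V W a
  set V : X → ℝ := ContractingWith.fixedPoint T hcon with hVdef
  have hV : T V = V := hcon.fixedPoint_isFixedPt
  have hbell : ∀ a b, b ∈ N a → V a ≤ c a b + β * V b := by
    intro a b hb
    rw [← congrFun hV a]
    exact Finset.inf'_le _ hb
  have hsel : ∀ a, ∃ b, b ∈ N a ∧ V a = c a b + β * V b := by
    intro a
    obtain ⟨b, hb, hbe⟩ := Finset.exists_mem_eq_inf' (hN a) (fun b => c a b + β * V b)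
    exact ⟨b, hb, by rw [← congrFun hV a]; exact hbe⟩
  choose μ hμ1 hμ2 using hsel
  refine ⟨μ, hμ1, ?_, ?_⟩
  · intro k m h
    simp only at h ⊢
    rw [Function.iterate_succ_apply', Function.iterate_succ_apply', h]
  intro y hy0 hyN
  set yb : ℕ → X := fun n => μ^[n] x with hyb
  -- recursion for Jcost
  have hrec : ∀ z : ℕ → X,
      Jcost K q p z = c (z 0) (z 1) + β * Jcost K q p (fun n => z (n + 1)) := by
    intro z
    have h := Jcost_rec hp hp1 hA' hB z
    rw [hc, hβdef]
    exact h
  -- telescoping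
  have htel : ∀ (z : ℕ → X) (n : ℕ), Jcost K q p z =
      (∑ k ∈ Finset.range n, β ^ k * c (z k) (z (k + 1))) +
        β ^ n * Jcost K q p (fun m => z (m + n)) := by
    intro z n
    induction n with
    | zero => simp
    | succ n ih =>
      rw [ih, Finset.sum_range_succ]
      have h := hrec (fun m => z (m + n))
      have e0 : z (0 + n) = z n := by rw [Nat.zero_add]
      have e1 : z (1 + n) = z (n + 1) := by rw [Nat.add_comm]
      have e2 : (fun m => z (m + 1 + n)) = (fun m => z (m + (n + 1))) := by
        funext m; congr 1; omega
      rw [e0, e1, e2] at h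
      rw [h]
      ring
  -- value inequality along admissible paths
  have hVle : ∀ n : ℕ, V x ≤
      (∑ k ∈ Finset.range n, β ^ k * c (y k) (y (k + 1))) + β ^ n * V (y n) := by
    intro n
    induction n with
    | zero => simp [hy0]
    | succ n ih =>
      have h := hbell (y n) (y (n + 1)) (hyN n)
      have h2 := mul_le_mul_of_nonneg_left h (pow_nonneg hβ0 n)
      calc V x ≤ (∑ k ∈ Finset.range n, β ^ k * c (y k) (y (k + 1))) + β ^ n * V (y n) := ih
        _ ≤ (∑ k ∈ Finset.range n, β ^ k * c (y k) (y (k + 1))) +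
              β ^ n * (c (y n) (y (n + 1)) + β * V (y (n + 1))) := by linarith
        _ = (∑ k ∈ Finset.range (n + 1), β ^ k * c (y k) (y (k + 1))) +
              β ^ (n + 1) * V (y (n + 1)) := by rw [Finset.sum_range_succ]; ring
  -- value equality along the policy path
  have hybsucc : ∀ n, yb (n + 1) = μ (yb n) := by
    intro n
    simp only [hyb]
    rw [Function.iterate_succ_apply']
  have hVeq : ∀ n : ℕ, V x =
      (∑ k ∈ Finset.range n, β ^ k * c (yb k) (yb (k + 1))) + β ^ n * V (yb n) := by
    intro n
    induction n with
    | zero => simp [hyb]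
    | succ n ih =>
      have h := hμ2 (yb n)
      rw [← hybsucc n] at h
      rw [ih, Finset.sum_range_succ, h]
      ring
  -- bounds
  obtain ⟨MV, hMV⟩ := Finite.exists_le (fun a : X => |V a|)
  set CJ : ℝ := ∑' t : ℕ, (1 - p) ^ t * (p * (A * (t + 1) + B)) with hCJdef
  have hCJ : ∀ z : ℕ → X, |Jcost K q p z| ≤ CJ := fun z =>
    abs_Jcost_le hp hp1 hA0 hB0 hA' hB z
  -- limits
  have hpow : Filter.Tendsto (fun n : ℕ => β ^ n) Filter.atTop (nhds 0) :=
    tendsto_pow_atTop_nhds_zero_of_lt_one hβ0 hβ1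
  have hmul0 : ∀ (g : ℕ → ℝ) (M : ℝ), (∀ n, |g n| ≤ M) →
      Filter.Tendsto (fun n => β ^ n * g n) Filter.atTop (nhds 0) := by
    intro g M hg
    apply squeeze_zero_norm (a := fun n => M * β ^ n)
    · intro n
      rw [Real.norm_eq_abs, abs_mul, abs_pow, abs_of_nonneg hβ0]
      exact (mul_le_mul_of_nonneg_left (hg n) (pow_nonneg hβ0 n)).trans_eq (mul_comm _ _)
    · simpa using hpow.const_mul M
  -- claim 1 : Jcost yb = V x
  have hd : ∀ n : ℕ, |Jcost K q p yb - V x| ≤ β ^ n * (CJ + MV) := by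
    intro n
    rw [htel yb n, hVeq n]
    have e : ((∑ k ∈ Finset.range n, β ^ k * c (yb k) (yb (k + 1))) +
          β ^ n * Jcost K q p (fun m => yb (m + n))) -
        ((∑ k ∈ Finset.range n, β ^ k * c (yb k) (yb (k + 1))) + β ^ n * V (yb n)) =
        β ^ n * (Jcost K q p (fun m => yb (m + n)) - V (yb n)) := by ring
    rw [e, abs_mul, abs_pow, abs_of_nonneg hβ0]
    apply mul_le_mul_of_nonneg_left _ (pow_nonneg hβ0 n)
    calc |Jcost K q p (fun m => yb (m + n)) - V (yb n)|
        ≤ |Jcost K q p (fun m => yb (m + n))| + |V (yb n)| := by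
          rw [sub_eq_add_neg]
          exact (abs_add_le _ _).trans_eq (by rw [abs_neg])
      _ ≤ CJ + MV := add_le_add (hCJ _) (hMV _)
  have heq : Jcost K q p yb = V x := by
    have h0 : Filter.Tendsto (fun n : ℕ => β ^ n * (CJ + MV)) Filter.atTop (nhds 0) := by
      simpa using hpow.mul_const (CJ + MV)
    have h1 : |Jcost K q p yb - V x| ≤ 0 := ge_of_tendsto' h0 hd
    have h2 : |Jcost K q p yb - V x| = 0 := le_antisymm h1 (abs_nonneg _)
    have := abs_eq_zero.mp h2
    linarith [sub_eq_zero.mp this]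
  -- claim 2 : V x ≤ Jcost y
  have hle : ∀ n : ℕ, V x ≤ Jcost K q p y +
      β ^ n * (V (y n) - Jcost K q p (fun m => y (m + n))) := by
    intro n
    calc V x ≤ (∑ k ∈ Finset.range n, β ^ k * c (y k) (y (k + 1))) + β ^ n * V (y n) := hVle n
      _ = ((∑ k ∈ Finset.range n, β ^ k * c (y k) (y (k + 1))) +
            β ^ n * Jcost K q p (fun m => y (m + n))) +
            β ^ n * (V (y n) - Jcost K q p (fun m => y (m + n))) := by ring
      _ = Jcost K q p y + β ^ n * (V (y n) - Jcost K q p (fun m => y (m + n))) := by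
          rw [← htel y n]
  have htend : Filter.Tendsto
      (fun n : ℕ => Jcost K q p y + β ^ n * (V (y n) - Jcost K q p (fun m => y (m + n))))
      Filter.atTop (nhds (Jcost K q p y)) := by
    have hb : ∀ n : ℕ, |V (y n) - Jcost K q p (fun m => y (m + n))| ≤ MV + CJ := by
      intro n
      rw [sub_eq_add_neg]
      exact ((abs_add_le _ _).trans_eq (by rw [abs_neg])).trans (add_le_add (hMV _) (hCJ _))
    have := hmul0 (fun n => V (y n) - Jcost K q p (fun m => y (m + n))) (MV + CJ) hb
    simpa using Filter.Tendsto.add (tendsto_const_nhds (x := Jcost K q p y)) this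
  have hfin : V x ≤ Jcost K q p y := ge_of_tendsto' htend hle
  rw [heq]
  exact hfin
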